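/- arXiv:1209.0108 — 2 statements merged into one kernel-verified Lean document; each statement's English description precedes it below -/
import Mathlib

section
/- Let N ≥ 1, j = N/2, and define g_N : [0, π] → ℝ by g_N(θ) := Σ_{n=1}^{N} C(N, n) (sin(θ/2))^{2n} (cos(θ/2))^{2(N−n)} · Σ_{k=1}^{n} 1/√(k(N−k+1)). Then g_N is differentiable with g_N'(θ) = Σ_{m=−j}^{j−1} C(2j, j+m)^{1/2} C(2j, j+m+1)^{1/2} (sin(θ/2))^{2j+2m+1} (cos(θ/2))^{2j−2m−1}, and 0 ≤ g_N'(θ) ≤ 1 for all θ ∈ [0, π]; consequently 0 ≤ g_N(θ) ≤ θ for all θ ∈ [0, π]. -/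
noncomputable section

/-- The explicit formula for the auxiliary distance `ρ_N` of the fuzzy sphere:
`g_N(θ) = Σ_{n=1}^{N} C(N,n) (sin(θ/2))^{2n} (cos(θ/2))^{2(N−n)} Σ_{k=1}^{n} 1/√(k(N−k+1))`. -/
def gN (N : ℕ) (θ : ℝ) : ℝ :=
  ∑ n ∈ Finset.Icc 1 N, (N.choose n : ℝ) *
    Real.sin (θ / 2) ^ (2 * n) * Real.cos (θ / 2) ^ (2 * (N - n)) *
    ∑ k ∈ Finset.Icc 1 n, 1 / Real.sqrt (k * (N + 1 - k))

/-- The derivative of `g_N`: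
`Σ_{m=−j}^{j−1} C(2j, j+m)^{1/2} C(2j, j+m+1)^{1/2} (sin(θ/2))^{2j+2m+1} (cos(θ/2))^{2j−2m−1}`,
written with `n = j + m ∈ {0, …, N−1}` (and `j = N/2`, `N = 2j`). -/
def gN' (N : ℕ) (θ : ℝ) : ℝ :=
  ∑ n ∈ Finset.range N, Real.sqrt (N.choose n) * Real.sqrt (N.choose (n + 1)) *
    Real.sin (θ / 2) ^ (2 * n + 1) * Real.cos (θ / 2) ^ (2 * N - 2 * n - 1)

/-- inner coefficient sum -/
def auxA (N n : ℕ) : ℝ := ∑ k ∈ Finset.Icc 1 n, 1 / Real.sqrt (k * (N + 1 - k))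

def auxP (N : ℕ) (S C : ℝ) (n : ℕ) : ℝ :=
  ((n : ℝ) * (N.choose n : ℝ) * auxA N n) * S ^ (2 * n - 1) * C ^ (2 * (N - n) + 1)

def auxQ (N : ℕ) (S C : ℝ) (n : ℕ) : ℝ :=
  (((N - n : ℕ) : ℝ) * (N.choose n : ℝ) * auxA N n) * S ^ (2 * n + 1) * C ^ (2 * (N - n) - 1)

lemma sqrt_mul_le_half {a b : ℝ} (ha : 0 ≤ a) (hb : 0 ≤ b) :
    Real.sqrt (a * b) ≤ (a + b) / 2 := by
  rw [Real.sqrt_mul ha]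
  nlinarith [Real.sq_sqrt ha, Real.sq_sqrt hb, sq_nonneg (Real.sqrt a - Real.sqrt b)]

lemma aux_key (N i : ℕ) (hi : i < N) (S C : ℝ) :
    auxP N S C (i + 1) - auxQ N S C i =
      Real.sqrt (N.choose i) * Real.sqrt (N.choose (i + 1)) *
        S ^ (2 * i + 1) * C ^ (2 * N - 2 * i - 1) := by
  have hex1 : 2 * (i + 1) - 1 = 2 * i + 1 := by omega
  have hex2 : 2 * (N - (i + 1)) + 1 = 2 * N - 2 * i - 1 := by omega
  have hex3 : 2 * (N - i) - 1 = 2 * N - 2 * i - 1 := by omega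
  unfold auxP auxQ
  rw [hex1, hex2, hex3]
  set x : ℝ := (N.choose i : ℝ) with hxdef
  set y : ℝ := (N.choose (i + 1) : ℝ) with hydef
  set a : ℝ := (i : ℝ) + 1 with hadef
  set b : ℝ := (N : ℝ) - (i : ℝ) with hbdef
  have ha : (0:ℝ) < a := by positivity
  have hb : (0:ℝ) < b := by
    have : (i : ℝ) < (N : ℝ) := by exact_mod_cast hi
    simp [hbdef]; linarith
  have hx : (0:ℝ) < x := by
    rw [hxdef]
    exact_mod_cast Nat.choose_pos (le_of_lt hi)
  have hchoose : a * y = b * x := by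
    have h := Nat.choose_succ_right_eq N i
    have hcast : ((N.choose (i+1) : ℝ)) * ((i:ℝ)+1) = (N.choose i : ℝ) * ((N:ℝ) - i) := by
      have := congrArg (fun t : ℕ => (t : ℝ)) h
      push_cast [Nat.cast_sub hi.le] at this
      convert this using 2
    rw [hadef, hbdef, hxdef, hydef]; linarith [hcast]
  have hA : auxA N (i + 1) = auxA N i + 1 / Real.sqrt (a * b) := by
    unfold auxA
    rw [Finset.sum_Icc_succ_top (by omega : 1 ≤ i + 1)]
    congr 2
    rw [hadef, hbdef]
    push_cast
    ring
  have key : Real.sqrt x * Real.sqrt y = b * x / Real.sqrt (a * b) := by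
    have hy' : y = b * x / a := by field_simp; linarith [hchoose]
    rw [← Real.sqrt_mul hx.le, hy',
      show x * (b * x / a) = (b * x) ^ 2 / (a * b) by field_simp,
      Real.sqrt_div (by positivity), Real.sqrt_sq (by positivity)]
  have hcoeff : a * y * auxA N (i + 1) - b * x * auxA N i = Real.sqrt x * Real.sqrt y := by
    rw [hA, key]
    linear_combination (auxA N i + 1 / Real.sqrt (a * b)) * hchoose
  push_cast [Nat.cast_sub hi.le]
  linear_combination (S ^ (2 * i + 1) * C ^ (2 * N - 2 * i - 1)) * hcoeff

lemma gN_hasDerivAt (N : ℕ) (θ : ℝ) : HasDerivAt (gN N) (gN' N θ) θ := by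
  set S : ℝ := Real.sin (θ / 2) with hSdef
  set C : ℝ := Real.cos (θ / 2) with hCdef
  have hhalf : HasDerivAt (fun x : ℝ => x / 2) (1 / 2) θ := (hasDerivAt_id θ).div_const 2
  have hs : HasDerivAt (fun x : ℝ => Real.sin (x / 2)) (C * (1 / 2)) θ :=
    hhalf.sin
  have hc : HasDerivAt (fun x : ℝ => Real.cos (x / 2)) (-S * (1 / 2)) θ :=
    hhalf.cos
  have hterm : ∀ n ∈ Finset.Icc 1 N,
      HasDerivAt (fun x => (N.choose n : ℝ) * Real.sin (x / 2) ^ (2 * n) *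
          Real.cos (x / 2) ^ (2 * (N - n)) * auxA N n)
        ((((N.choose n : ℝ) * (((2 * n : ℕ) : ℝ) * S ^ (2 * n - 1) * (C * (1 / 2)))) *
            C ^ (2 * (N - n)) +
          ((N.choose n : ℝ) * S ^ (2 * n)) *
            (((2 * (N - n) : ℕ) : ℝ) * C ^ (2 * (N - n) - 1) * (-S * (1 / 2)))) * auxA N n) θ := by
    intro n _
    exact (((hs.pow _).const_mul _).mul (hc.pow _)).mul_const _
  have hsum := HasDerivAt.fun_sum hterm
  have hDeq : ∀ n ∈ Finset.Icc 1 N,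
      (((N.choose n : ℝ) * (((2 * n : ℕ) : ℝ) * S ^ (2 * n - 1) * (C * (1 / 2)))) *
            C ^ (2 * (N - n)) +
          ((N.choose n : ℝ) * S ^ (2 * n)) *
            (((2 * (N - n) : ℕ) : ℝ) * C ^ (2 * (N - n) - 1) * (-S * (1 / 2)))) * auxA N n =
        auxP N S C n - auxQ N S C n := by
    intro n hn
    have hn1 : 1 ≤ n := (Finset.mem_Icc.mp hn).1
    have e1 : S ^ (2 * n) = S ^ (2 * n - 1) * S := by
      rw [← pow_succ]; congr 1; omega
    have e2 : S ^ (2 * n + 1) = S ^ (2 * n - 1) * S * S := by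
      rw [← pow_succ, ← pow_succ]; congr 1; omega
    unfold auxP auxQ
    rw [e2, e1, pow_succ]
    push_cast
    ring
  have hkey : (∑ n ∈ Finset.Icc 1 N,
      (((N.choose n : ℝ) * (((2 * n : ℕ) : ℝ) * S ^ (2 * n - 1) * (C * (1 / 2)))) *
            C ^ (2 * (N - n)) +
          ((N.choose n : ℝ) * S ^ (2 * n)) *
            (((2 * (N - n) : ℕ) : ℝ) * C ^ (2 * (N - n) - 1) * (-S * (1 / 2)))) * auxA N n) =
      gN' N θ := by
    rw [Finset.sum_congr rfl hDeq]
    have hshift : ∑ n ∈ Finset.Icc 1 N, (auxP N S C n - auxQ N S C n) =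
        ∑ i ∈ Finset.range N, (auxP N S C (i + 1) - auxQ N S C (i + 1)) := by
      rw [← Finset.Ico_add_one_right_eq_Icc, Finset.sum_Ico_eq_sum_range]
      simp [Nat.add_sub_cancel, add_comm]
    rw [hshift, Finset.sum_sub_distrib]
    have hQ0 : auxQ N S C 0 = 0 := by simp [auxQ, auxA]
    have hQN : auxQ N S C N = 0 := by simp [auxQ]
    have hQshift : ∑ i ∈ Finset.range N, auxQ N S C (i + 1) =
        ∑ i ∈ Finset.range N, auxQ N S C i := by
      have h1 := Finset.sum_range_succ' (auxQ N S C) N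
      have h2 := Finset.sum_range_succ (auxQ N S C) N
      rw [h2] at h1
      linarith
    rw [hQshift, ← Finset.sum_sub_distrib]
    exact Finset.sum_congr rfl fun i hi => aux_key N i (Finset.mem_range.mp hi) S C
  rw [← hkey]
  exact hsum

def auxa (N : ℕ) (S C : ℝ) (n : ℕ) : ℝ :=
  (N.choose n : ℝ) * (S ^ 2) ^ n * (C ^ 2) ^ (N - n)

lemma sum_auxa (N : ℕ) (S C : ℝ) (h : S ^ 2 + C ^ 2 = 1) :
    ∑ n ∈ Finset.range (N + 1), auxa N S C n = 1 := by
  have := add_pow (S ^ 2) (C ^ 2) N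
  rw [h, one_pow] at this
  rw [← this.symm]
  exact Finset.sum_congr rfl fun n _ => by unfold auxa; ring

lemma gN'_le_one (N : ℕ) {S C : ℝ} (hS : 0 ≤ S) (hC : 0 ≤ C) (h : S ^ 2 + C ^ 2 = 1) :
    ∑ n ∈ Finset.range N, Real.sqrt (N.choose n) * Real.sqrt (N.choose (n + 1)) *
      S ^ (2 * n + 1) * C ^ (2 * N - 2 * n - 1) ≤ 1 := by
  have ha : ∀ n, 0 ≤ auxa N S C n := fun n => by unfold auxa; positivity
  have hterm : ∀ n ∈ Finset.range N,
      Real.sqrt (N.choose n) * Real.sqrt (N.choose (n + 1)) *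
        S ^ (2 * n + 1) * C ^ (2 * N - 2 * n - 1) ≤ (auxa N S C n + auxa N S C (n + 1)) / 2 := by
    intro n hn
    have hnN : n < N := Finset.mem_range.mp hn
    have heq : Real.sqrt (auxa N S C n * auxa N S C (n + 1)) =
        Real.sqrt (N.choose n) * Real.sqrt (N.choose (n + 1)) *
          S ^ (2 * n + 1) * C ^ (2 * N - 2 * n - 1) := by
      have e1 : auxa N S C n * auxa N S C (n + 1) =
          ((N.choose n : ℝ) * (N.choose (n + 1) : ℝ)) *
            (S ^ (2 * n + 1) * C ^ (2 * N - 2 * n - 1)) ^ 2 := by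
        unfold auxa
        rw [show N - n = (N - (n + 1)) + 1 from by omega,
          show 2 * N - 2 * n - 1 = 2 * (N - (n + 1)) + 1 from by omega]
        ring
      rw [e1, Real.sqrt_mul (by positivity), Real.sqrt_mul (Nat.cast_nonneg _),
        Real.sqrt_sq (by positivity)]
      ring
    rw [← heq]
    exact sqrt_mul_le_half (ha n) (ha (n + 1))
  calc ∑ n ∈ Finset.range N, Real.sqrt (N.choose n) * Real.sqrt (N.choose (n + 1)) *
        S ^ (2 * n + 1) * C ^ (2 * N - 2 * n - 1)
      ≤ ∑ n ∈ Finset.range N, (auxa N S C n + auxa N S C (n + 1)) / 2 :=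
        Finset.sum_le_sum hterm
    _ = ((∑ n ∈ Finset.range N, auxa N S C n) +
          (∑ n ∈ Finset.range N, auxa N S C (n + 1))) / 2 := by
        rw [← Finset.sum_add_distrib, ← Finset.sum_div]
    _ ≤ (1 + 1) / 2 := by
        have h1 : ∑ n ∈ Finset.range N, auxa N S C n ≤ 1 := by
          have := sum_auxa N S C h
          rw [Finset.sum_range_succ] at this
          linarith [ha N]
        have h2 : ∑ n ∈ Finset.range N, auxa N S C (n + 1) ≤ 1 := by
          have := sum_auxa N S C h
          rw [Finset.sum_range_succ'] at this
          linarith [ha 0]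
        linarith
    _ = 1 := by norm_num

theorem gN_deriv_bounds (N : ℕ) (hN : 1 ≤ N) :
    (∀ θ ∈ Set.Icc (0 : ℝ) Real.pi, HasDerivAt (gN N) (gN' N θ) θ) ∧
    (∀ θ ∈ Set.Icc (0 : ℝ) Real.pi, 0 ≤ gN' N θ ∧ gN' N θ ≤ 1) ∧
    (∀ θ ∈ Set.Icc (0 : ℝ) Real.pi, 0 ≤ gN N θ ∧ gN N θ ≤ θ) := by
  have hpi := Real.pi_pos
  have hbound : ∀ θ ∈ Set.Icc (0 : ℝ) Real.pi, 0 ≤ gN' N θ ∧ gN' N θ ≤ 1 := by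
    intro θ hθ
    obtain ⟨h0, h1⟩ := hθ
    have hS : 0 ≤ Real.sin (θ / 2) :=
      Real.sin_nonneg_of_nonneg_of_le_pi (by linarith) (by linarith)
    have hC : 0 ≤ Real.cos (θ / 2) :=
      Real.cos_nonneg_of_mem_Icc ⟨by linarith, by linarith⟩
    constructor
    · exact Finset.sum_nonneg fun n _ => by positivity
    · exact gN'_le_one N hS hC (Real.sin_sq_add_cos_sq (θ / 2))
  refine ⟨fun θ _ => gN_hasDerivAt N θ, hbound, ?_⟩
  have hdiff : Differentiable ℝ (gN N) := fun θ => (gN_hasDerivAt N θ).differentiableAt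
  have hg0 : gN N 0 = 0 := by
    unfold gN
    refine Finset.sum_eq_zero fun n hn => ?_
    have : 2 * n ≠ 0 := by have := (Finset.mem_Icc.mp hn).1; omega
    simp [this, zero_pow]
  intro θ hθ
  have hmono : MonotoneOn (gN N) (Set.Icc 0 Real.pi) := by
    apply monotoneOn_of_deriv_nonneg (convex_Icc 0 Real.pi) hdiff.continuous.continuousOn
      (hdiff.differentiableOn)
    intro x hx
    rw [interior_Icc] at hx
    rw [(gN_hasDerivAt N x).deriv]
    exact (hbound x ⟨hx.1.le, hx.2.le⟩).1
  have hmono2 : MonotoneOn (fun t => t - gN N t) (Set.Icc 0 Real.pi) := by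
    apply monotoneOn_of_deriv_nonneg (convex_Icc 0 Real.pi)
      (continuous_id.sub hdiff.continuous).continuousOn
      (differentiable_id.sub hdiff).differentiableOn
    intro x hx
    rw [interior_Icc] at hx
    have hd : HasDerivAt (fun t => t - gN N t) (1 - gN' N x) x :=
      (hasDerivAt_id x).sub (gN_hasDerivAt N x)
    have hdeq : deriv (id - gN N) x = 1 - gN' N x := hd.deriv
    rw [hdeq]
    have := (hbound x ⟨hx.1.le, hx.2.le⟩).2
    linarith
  have h0mem : (0 : ℝ) ∈ Set.Icc (0 : ℝ) Real.pi := ⟨le_refl 0, hpi.le⟩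
  constructor
  · have := hmono h0mem hθ hθ.1
    rw [hg0] at this
    exact this
  · have := hmono2 h0mem hθ hθ.1
    simp only [hg0] at this
    linarith [this]
end
end

section
/- Define s_N := Σ_{k=1}^{N} 1/√(k(N−k+1)) for integers N ≥ 1. Then for every odd N ≥ 1 one has s_N ≥ 2 arcsin((N−1)/(N+1)), and lim_{N→∞} s_N = π. -/
noncomputable section
open Filter

/-- The diameter of the fuzzy sphere: `s_N = Σ_{k=1}^{N} 1/√(k(N−k+1))`. -/
def fuzzyDiam (N : ℕ) : ℝ :=
  ∑ k ∈ Finset.Icc 1 N, 1 / Real.sqrt (k * (N + 1 - k))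

namespace FuzzyAux

/-- MVT upper bound for arcsin differences on the nonpositive side. -/
lemma arcsin_diff_le {c b : ℝ} (h1 : -1 < c) (hcb : c ≤ b) (hb : b ≤ 0) :
    Real.arcsin b - Real.arcsin c ≤ (b - c) / Real.sqrt (1 - c ^ 2) := by
  have hsc : 0 < Real.sqrt (1 - c ^ 2) := Real.sqrt_pos.2 (by nlinarith)
  have hdiff : DifferentiableOn ℝ Real.arcsin (interior (Set.Icc c b)) := by
    rw [interior_Icc]
    intro x hx
    exact (Real.differentiableAt_arcsin.2
      ⟨(h1.trans hx.1).ne', ((hx.2.trans_le hb).trans one_pos).ne⟩).differentiableWithinAt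
  have hbound : ∀ x ∈ interior (Set.Icc c b),
      deriv Real.arcsin x ≤ 1 / Real.sqrt (1 - c ^ 2) := by
    rw [interior_Icc]
    intro x hx
    rw [Real.deriv_arcsin]
    apply one_div_le_one_div_of_le hsc
    apply Real.sqrt_le_sqrt
    nlinarith [hx.1, hx.2]
  have key := (convex_Icc c b).image_sub_le_mul_sub_of_deriv_le
      Real.continuous_arcsin.continuousOn hdiff hbound
      c (Set.left_mem_Icc.2 hcb) b (Set.right_mem_Icc.2 hcb) hcb
  calc Real.arcsin b - Real.arcsin c ≤ 1 / Real.sqrt (1 - c ^ 2) * (b - c) := key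
    _ = (b - c) / Real.sqrt (1 - c ^ 2) := by ring

/-- MVT lower bound for arcsin differences on the nonpositive side. -/
lemma arcsin_diff_ge {c b : ℝ} (h1 : -1 < c) (hcb : c ≤ b) (hb : b ≤ 0) :
    (b - c) / Real.sqrt (1 - b ^ 2) ≤ Real.arcsin b - Real.arcsin c := by
  have hdiff : DifferentiableOn ℝ Real.arcsin (interior (Set.Icc c b)) := by
    rw [interior_Icc]
    intro x hx
    exact (Real.differentiableAt_arcsin.2
      ⟨(h1.trans hx.1).ne', ((hx.2.trans_le hb).trans one_pos).ne⟩).differentiableWithinAt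
  have hbound : ∀ x ∈ interior (Set.Icc c b),
      1 / Real.sqrt (1 - b ^ 2) ≤ deriv Real.arcsin x := by
    rw [interior_Icc]
    intro x hx
    rw [Real.deriv_arcsin]
    have hx1 : -1 < x := h1.trans hx.1
    have hx2 : x < 1 := (hx.2.trans_le hb).trans one_pos
    have hsx : 0 < Real.sqrt (1 - x ^ 2) := Real.sqrt_pos.2 (by nlinarith)
    apply one_div_le_one_div_of_le hsx
    apply Real.sqrt_le_sqrt
    nlinarith [hx.1, hx.2]
  have key := (convex_Icc c b).mul_sub_le_image_sub_of_le_deriv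
      Real.continuous_arcsin.continuousOn hdiff hbound
      c (Set.left_mem_Icc.2 hcb) b (Set.right_mem_Icc.2 hcb) hcb
  calc (b - c) / Real.sqrt (1 - b ^ 2) = 1 / Real.sqrt (1 - b ^ 2) * (b - c) := by ring
    _ ≤ Real.arcsin b - Real.arcsin c := key

/-- MVT upper bound for arcsin differences on the nonnegative side. -/
lemma arcsin_diff_le' {c b : ℝ} (hc : 0 ≤ c) (hcb : c ≤ b) (hb : b < 1) :
    Real.arcsin b - Real.arcsin c ≤ (b - c) / Real.sqrt (1 - b ^ 2) := by
  have h := arcsin_diff_le (c := -b) (b := -c) (by linarith) (by linarith) (by linarith)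
  rw [Real.arcsin_neg, Real.arcsin_neg, neg_sq] at h
  have h2 : (-c - -b) / Real.sqrt (1 - b ^ 2) = (b - c) / Real.sqrt (1 - b ^ 2) := by ring
  rw [h2] at h
  linarith

/-- MVT lower bound for arcsin differences on the nonnegative side. -/
lemma arcsin_diff_ge' {c b : ℝ} (hc : 0 ≤ c) (hcb : c ≤ b) (hb : b < 1) :
    (b - c) / Real.sqrt (1 - c ^ 2) ≤ Real.arcsin b - Real.arcsin c := by
  have h := arcsin_diff_ge (c := -b) (b := -c) (by linarith) (by linarith) (by linarith)
  rw [Real.arcsin_neg, Real.arcsin_neg, neg_sq] at h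
  have h2 : (-c - -b) / Real.sqrt (1 - c ^ 2) = (b - c) / Real.sqrt (1 - c ^ 2) := by ring
  rw [h2] at h
  linarith

lemma key_calc {a x : ℝ} (hx : 0 < x) (hxa : x < a) :
    (2 / a) / Real.sqrt (1 - ((2 * x - a) / a) ^ 2) = 1 / Real.sqrt (x * (a - x)) := by
  have ha : 0 < a := hx.trans hxa
  have hane : a ≠ 0 := ha.ne'
  have h1 : 1 - ((2 * x - a) / a) ^ 2 = (2 / a) ^ 2 * (x * (a - x)) := by
    field_simp
    ring
  rw [h1, Real.sqrt_mul (sq_nonneg _), Real.sqrt_sq (by positivity)]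
  rw [div_mul_eq_div_div, div_self (by positivity : (2:ℝ)/a ≠ 0)]

/-- The telescoping arcsin values. -/
def FF (N k : ℕ) : ℝ := Real.arcsin ((2 * (k : ℝ) - ((N : ℝ) + 1)) / ((N : ℝ) + 1))

/-- The summand of `fuzzyDiam`. -/
def gg (N k : ℕ) : ℝ := 1 / Real.sqrt ((k : ℝ) * ((N : ℝ) + 1 - (k : ℝ)))

lemma fuzzyDiam_eq (N : ℕ) : fuzzyDiam N = ∑ k ∈ Finset.Icc 1 N, gg N k := rfl

lemma gg_nonneg (N k : ℕ) : 0 ≤ gg N k := by unfold gg; positivity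

lemma step_A (N k : ℕ) (h1 : 1 ≤ k) (h2 : 2 * k + 2 ≤ N + 1) :
    FF N (k + 1) - FF N k ≤ gg N k := by
  have hk : (1 : ℝ) ≤ (k : ℝ) := by exact_mod_cast h1
  have h2' : 2 * (k : ℝ) + 2 ≤ (N : ℝ) + 1 := by exact_mod_cast h2
  have ha : (0 : ℝ) < (N : ℝ) + 1 := by positivity
  have hane : ((N : ℝ) + 1) ≠ 0 := ha.ne'
  simp only [FF, gg]
  push_cast
  have h1' : (-1 : ℝ) < (2 * (k : ℝ) - ((N : ℝ) + 1)) / ((N : ℝ) + 1) := by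
    rw [lt_div_iff₀ ha]; nlinarith
  have hcb : (2 * (k : ℝ) - ((N : ℝ) + 1)) / ((N : ℝ) + 1)
      ≤ (2 * ((k : ℝ) + 1) - ((N : ℝ) + 1)) / ((N : ℝ) + 1) := by
    rw [div_le_div_iff₀ ha ha]; nlinarith
  have hb : (2 * ((k : ℝ) + 1) - ((N : ℝ) + 1)) / ((N : ℝ) + 1) ≤ 0 := by
    rw [div_nonpos_iff]; right; constructor <;> linarith
  have key := arcsin_diff_le h1' hcb hb
  have hbc : (2 * ((k : ℝ) + 1) - ((N : ℝ) + 1)) / ((N : ℝ) + 1)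
      - (2 * (k : ℝ) - ((N : ℝ) + 1)) / ((N : ℝ) + 1) = 2 / ((N : ℝ) + 1) := by
    field_simp
    ring
  rw [hbc, key_calc (by linarith : (0:ℝ) < (k : ℝ)) (by linarith : (k : ℝ) < (N : ℝ) + 1)] at key
  exact key

lemma step_B (N k : ℕ) (h1 : 2 ≤ k) (h2 : 2 * k ≤ N + 1) :
    gg N k ≤ FF N k - FF N (k - 1) := by
  have hk : (2 : ℝ) ≤ (k : ℝ) := by exact_mod_cast h1
  have h2' : 2 * (k : ℝ) ≤ (N : ℝ) + 1 := by exact_mod_cast h2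
  have ha : (0 : ℝ) < (N : ℝ) + 1 := by positivity
  have hane : ((N : ℝ) + 1) ≠ 0 := ha.ne'
  have hc : ((k - 1 : ℕ) : ℝ) = (k : ℝ) - 1 := by
    rw [Nat.cast_sub (by omega)]; norm_num
  simp only [FF, gg, hc]
  have h1' : (-1 : ℝ) < (2 * ((k : ℝ) - 1) - ((N : ℝ) + 1)) / ((N : ℝ) + 1) := by
    rw [lt_div_iff₀ ha]; nlinarith
  have hcb : (2 * ((k : ℝ) - 1) - ((N : ℝ) + 1)) / ((N : ℝ) + 1)
      ≤ (2 * (k : ℝ) - ((N : ℝ) + 1)) / ((N : ℝ) + 1) := by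
    rw [div_le_div_iff₀ ha ha]; nlinarith
  have hb : (2 * (k : ℝ) - ((N : ℝ) + 1)) / ((N : ℝ) + 1) ≤ 0 := by
    rw [div_nonpos_iff]; right; constructor <;> linarith
  have key := arcsin_diff_ge h1' hcb hb
  have hbc : (2 * (k : ℝ) - ((N : ℝ) + 1)) / ((N : ℝ) + 1)
      - (2 * ((k : ℝ) - 1) - ((N : ℝ) + 1)) / ((N : ℝ) + 1) = 2 / ((N : ℝ) + 1) := by
    field_simp
    ring
  rw [hbc, key_calc (by linarith : (0:ℝ) < (k : ℝ)) (by linarith : (k : ℝ) < (N : ℝ) + 1)] at key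
  exact key

lemma step_C (N k : ℕ) (h1 : N + 3 ≤ 2 * k) (h2 : k ≤ N) :
    FF N k - FF N (k - 1) ≤ gg N k := by
  have hk : (N : ℝ) + 3 ≤ 2 * (k : ℝ) := by exact_mod_cast h1
  have h2' : (k : ℝ) ≤ (N : ℝ) := by exact_mod_cast h2
  have ha : (0 : ℝ) < (N : ℝ) + 1 := by positivity
  have hane : ((N : ℝ) + 1) ≠ 0 := ha.ne'
  have hc : ((k - 1 : ℕ) : ℝ) = (k : ℝ) - 1 := by
    rw [Nat.cast_sub (by omega)]; norm_num
  simp only [FF, gg, hc]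
  have h1' : (0 : ℝ) ≤ (2 * ((k : ℝ) - 1) - ((N : ℝ) + 1)) / ((N : ℝ) + 1) := by
    apply div_nonneg _ ha.le; linarith
  have hcb : (2 * ((k : ℝ) - 1) - ((N : ℝ) + 1)) / ((N : ℝ) + 1)
      ≤ (2 * (k : ℝ) - ((N : ℝ) + 1)) / ((N : ℝ) + 1) := by
    rw [div_le_div_iff₀ ha ha]; nlinarith
  have hb : (2 * (k : ℝ) - ((N : ℝ) + 1)) / ((N : ℝ) + 1) < 1 := by
    rw [div_lt_one ha]; linarith
  have key := arcsin_diff_le' h1' hcb hb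
  have hbc : (2 * (k : ℝ) - ((N : ℝ) + 1)) / ((N : ℝ) + 1)
      - (2 * ((k : ℝ) - 1) - ((N : ℝ) + 1)) / ((N : ℝ) + 1) = 2 / ((N : ℝ) + 1) := by
    field_simp
    ring
  rw [hbc, key_calc (by linarith : (0:ℝ) < (k : ℝ)) (by linarith : (k : ℝ) < (N : ℝ) + 1)] at key
  exact key

lemma step_D (N k : ℕ) (h1 : N + 1 ≤ 2 * k) (h2 : k < N) :
    gg N k ≤ FF N (k + 1) - FF N k := by
  have hk : (N : ℝ) + 1 ≤ 2 * (k : ℝ) := by exact_mod_cast h1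
  have h2' : (k : ℝ) < (N : ℝ) := by exact_mod_cast h2
  have ha : (0 : ℝ) < (N : ℝ) + 1 := by positivity
  have hane : ((N : ℝ) + 1) ≠ 0 := ha.ne'
  simp only [FF, gg]
  push_cast
  have h1' : (0 : ℝ) ≤ (2 * (k : ℝ) - ((N : ℝ) + 1)) / ((N : ℝ) + 1) := by
    apply div_nonneg _ ha.le; linarith
  have hcb : (2 * (k : ℝ) - ((N : ℝ) + 1)) / ((N : ℝ) + 1)
      ≤ (2 * ((k : ℝ) + 1) - ((N : ℝ) + 1)) / ((N : ℝ) + 1) := by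
    rw [div_le_div_iff₀ ha ha]; nlinarith
  have hb : (2 * ((k : ℝ) + 1) - ((N : ℝ) + 1)) / ((N : ℝ) + 1) < 1 := by
    rw [div_lt_one ha]; linarith
  have key := arcsin_diff_ge' h1' hcb hb
  have hbc : (2 * ((k : ℝ) + 1) - ((N : ℝ) + 1)) / ((N : ℝ) + 1)
      - (2 * (k : ℝ) - ((N : ℝ) + 1)) / ((N : ℝ) + 1) = 2 / ((N : ℝ) + 1) := by
    field_simp
    ring
  rw [hbc, key_calc (by linarith : (0:ℝ) < (k : ℝ)) (by linarith : (k : ℝ) < (N : ℝ) + 1)] at key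
  exact key

lemma teleUp (F : ℕ → ℝ) (l : ℕ) : ∀ r, l ≤ r →
    ∑ k ∈ Finset.Ioc l r, (F (k + 1) - F k) = F (r + 1) - F (l + 1) := by
  intro r hr
  induction r, hr using Nat.le_induction with
  | base => simp
  | succ r hr ih => rw [Finset.sum_Ioc_succ_top hr, ih]; ring

lemma teleDown (F : ℕ → ℝ) (l : ℕ) : ∀ r, l ≤ r →
    ∑ k ∈ Finset.Ioc l r, (F k - F (k - 1)) = F r - F l := by
  intro r hr
  induction r, hr using Nat.le_induction with
  | base => simp
  | succ r hr ih => rw [Finset.sum_Ioc_succ_top hr, ih, Nat.add_sub_cancel]; ring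

lemma FF_top (N : ℕ) :
    FF N N = Real.arcsin (((N : ℝ) - 1) / ((N : ℝ) + 1)) := by
  simp only [FF]
  congr 1
  ring

lemma FF_one (N : ℕ) :
    FF N 1 = -Real.arcsin (((N : ℝ) - 1) / ((N : ℝ) + 1)) := by
  simp only [FF]
  rw [show (2 * ((1:ℕ) : ℝ) - ((N : ℝ) + 1)) / ((N : ℝ) + 1)
      = -((((N : ℝ) - 1)) / ((N : ℝ) + 1)) by push_cast; ring, Real.arcsin_neg]

/-- Lower bound for odd `N = 2m-1`. -/
lemma odd_lower (m : ℕ) (hm : 1 ≤ m) :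
    2 * Real.arcsin ((((2 * m - 1 : ℕ) : ℝ) - 1) / (((2 * m - 1 : ℕ) : ℝ) + 1))
      ≤ fuzzyDiam (2 * m - 1) := by
  set N := 2 * m - 1 with hNdef
  have hsum : fuzzyDiam N = ∑ k ∈ Finset.Ioc 0 (m - 1), gg N k
      + ∑ k ∈ Finset.Ioc (m - 1) m, gg N k + ∑ k ∈ Finset.Ioc m N, gg N k := by
    rw [fuzzyDiam_eq, show Finset.Icc 1 N = Finset.Ioc 0 N from Finset.Icc_add_one_left_eq_Ioc 0 N,
      ← Finset.sum_Ioc_consecutive _ (show (0:ℕ) ≤ m by omega) (show m ≤ N by omega),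
      ← Finset.sum_Ioc_consecutive _ (show (0:ℕ) ≤ m - 1 by omega) (show m - 1 ≤ m by omega)]
  have hA : FF N m - FF N 1 ≤ ∑ k ∈ Finset.Ioc 0 (m - 1), gg N k := by
    have := Finset.sum_le_sum (f := fun k => FF N (k + 1) - FF N k) (g := fun k => gg N k)
      (s := Finset.Ioc 0 (m - 1)) (fun k hk => by
        have hk' := Finset.mem_Ioc.1 hk
        exact step_A N k (by omega) (by omega))
    rwa [teleUp (FF N) 0 (m - 1) (by omega), Nat.zero_add,
      show m - 1 + 1 = m by omega] at this
  have hC : FF N N - FF N m ≤ ∑ k ∈ Finset.Ioc m N, gg N k := by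
    have := Finset.sum_le_sum (f := fun k => FF N k - FF N (k - 1)) (g := fun k => gg N k)
      (s := Finset.Ioc m N) (fun k hk => by
        have hk' := Finset.mem_Ioc.1 hk
        exact step_C N k (by omega) (by omega))
    rwa [teleDown (FF N) m N (by omega)] at this
  have hB : (0:ℝ) ≤ ∑ k ∈ Finset.Ioc (m - 1) m, gg N k :=
    Finset.sum_nonneg fun k _ => gg_nonneg N k
  have htot : FF N N - FF N 1 ≤ fuzzyDiam N := by
    rw [hsum]; linarith
  rw [FF_top, FF_one] at htot
  linarith

/-- General lower bound for `N ≥ 3`. -/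
lemma gen_lower (N : ℕ) (hN : 3 ≤ N) :
    2 * Real.arcsin (((N : ℝ) - 1) / ((N : ℝ) + 1))
      - 2 * Real.arcsin (2 / ((N : ℝ) + 1)) ≤ fuzzyDiam N := by
  set p := (N + 1) / 2 with hpdef
  have hp1 : 2 * p ≤ N + 1 := by omega
  have hp2 : N ≤ 2 * p := by omega
  have hp3 : 2 ≤ p := by omega
  have hp4 : p + 1 ≤ N := by omega
  have ha : (0 : ℝ) < (N : ℝ) + 1 := by positivity
  have hsum : fuzzyDiam N = ∑ k ∈ Finset.Ioc 0 (p - 1), gg N k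
      + ∑ k ∈ Finset.Ioc (p - 1) (p + 1), gg N k + ∑ k ∈ Finset.Ioc (p + 1) N, gg N k := by
    rw [fuzzyDiam_eq, show Finset.Icc 1 N = Finset.Ioc 0 N from Finset.Icc_add_one_left_eq_Ioc 0 N,
      ← Finset.sum_Ioc_consecutive _ (show (0:ℕ) ≤ p + 1 by omega) (show p + 1 ≤ N by omega),
      ← Finset.sum_Ioc_consecutive _ (show (0:ℕ) ≤ p - 1 by omega) (show p - 1 ≤ p + 1 by omega)]
  have hA : FF N p - FF N 1 ≤ ∑ k ∈ Finset.Ioc 0 (p - 1), gg N k := by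
    have := Finset.sum_le_sum (f := fun k => FF N (k + 1) - FF N k) (g := fun k => gg N k)
      (s := Finset.Ioc 0 (p - 1)) (fun k hk => by
        have hk' := Finset.mem_Ioc.1 hk
        exact step_A N k (by omega) (by omega))
    rwa [teleUp (FF N) 0 (p - 1) (by omega), Nat.zero_add,
      show p - 1 + 1 = p by omega] at this
  have hC : FF N N - FF N (p + 1) ≤ ∑ k ∈ Finset.Ioc (p + 1) N, gg N k := by
    have := Finset.sum_le_sum (f := fun k => FF N k - FF N (k - 1)) (g := fun k => gg N k)
      (s := Finset.Ioc (p + 1) N) (fun k hk => by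
        have hk' := Finset.mem_Ioc.1 hk
        exact step_C N k (by omega) (by omega))
    rwa [teleDown (FF N) (p + 1) N (by omega)] at this
  have hB : (0:ℝ) ≤ ∑ k ∈ Finset.Ioc (p - 1) (p + 1), gg N k :=
    Finset.sum_nonneg fun k _ => gg_nonneg N k
  have hmid : FF N (p + 1) - FF N p ≤ 2 * Real.arcsin (2 / ((N : ℝ) + 1)) := by
    have hp1' : 2 * (p : ℝ) ≤ (N : ℝ) + 1 := by exact_mod_cast hp1
    have hp2' : (N : ℝ) ≤ 2 * (p : ℝ) := by exact_mod_cast hp2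
    have hup : FF N (p + 1) ≤ Real.arcsin (2 / ((N : ℝ) + 1)) := by
      apply Real.monotone_arcsin
      push_cast
      rw [div_le_div_iff₀ ha ha]
      nlinarith
    have hlo : -Real.arcsin (2 / ((N : ℝ) + 1)) ≤ FF N p := by
      rw [← Real.arcsin_neg]
      apply Real.monotone_arcsin
      rw [show -(2 / ((N : ℝ) + 1)) = (-2) / ((N : ℝ) + 1) by ring]
      rw [div_le_div_iff₀ ha ha]
      nlinarith
    linarith
  have htot : FF N p - FF N 1 + (FF N N - FF N (p + 1)) ≤ fuzzyDiam N := by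
    rw [hsum]; linarith
  rw [FF_one] at htot
  rw [FF_top] at htot
  linarith

/-- General upper bound for `N ≥ 3`. -/
lemma gen_upper (N : ℕ) (hN : 3 ≤ N) :
    fuzzyDiam N ≤ Real.pi + 2 / Real.sqrt N := by
  set p := (N + 1) / 2 with hpdef
  have hp1 : 2 * p ≤ N + 1 := by omega
  have hp2 : N ≤ 2 * p := by omega
  have hp3 : 2 ≤ p := by omega
  have hp4 : p + 1 ≤ N := by omega
  have ha : (0 : ℝ) < (N : ℝ) + 1 := by positivity
  have hone : Finset.Ioc 0 1 = {1} := by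
    ext x; simp only [Finset.mem_Ioc, Finset.mem_singleton]; omega
  have hlast : Finset.Ioc (N - 1) N = {N} := by
    ext x; simp only [Finset.mem_Ioc, Finset.mem_singleton]; omega
  have hsum : fuzzyDiam N = gg N 1 + ∑ k ∈ Finset.Ioc 1 p, gg N k
      + ∑ k ∈ Finset.Ioc p (N - 1), gg N k + gg N N := by
    rw [fuzzyDiam_eq, show Finset.Icc 1 N = Finset.Ioc 0 N from Finset.Icc_add_one_left_eq_Ioc 0 N,
      ← Finset.sum_Ioc_consecutive _ (show (0:ℕ) ≤ N - 1 by omega) (show N - 1 ≤ N by omega),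
      ← Finset.sum_Ioc_consecutive _ (show (0:ℕ) ≤ p by omega) (show p ≤ N - 1 by omega),
      ← Finset.sum_Ioc_consecutive _ (show (0:ℕ) ≤ 1 by omega) (show 1 ≤ p by omega),
      hone, hlast, Finset.sum_singleton, Finset.sum_singleton]
  have hB : ∑ k ∈ Finset.Ioc 1 p, gg N k ≤ FF N p - FF N 1 := by
    have := Finset.sum_le_sum (f := fun k => gg N k) (g := fun k => FF N k - FF N (k - 1))
      (s := Finset.Ioc 1 p) (fun k hk => by
        have hk' := Finset.mem_Ioc.1 hk
        exact step_B N k (by omega) (by omega))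
    rwa [teleDown (FF N) 1 p (by omega)] at this
  have hD : ∑ k ∈ Finset.Ioc p (N - 1), gg N k ≤ FF N N - FF N (p + 1) := by
    have := Finset.sum_le_sum (f := fun k => gg N k) (g := fun k => FF N (k + 1) - FF N k)
      (s := Finset.Ioc p (N - 1)) (fun k hk => by
        have hk' := Finset.mem_Ioc.1 hk
        exact step_D N k (by omega) (by omega))
    rwa [teleUp (FF N) p (N - 1) (by omega), show N - 1 + 1 = N by omega] at this
  have hFp : FF N p ≤ 0 := by
    apply Real.arcsin_nonpos.2
    apply div_nonpos_of_nonpos_of_nonneg _ ha.le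
    have : 2 * (p : ℝ) ≤ (N : ℝ) + 1 := by exact_mod_cast hp1
    linarith
  have hF1 : -(Real.pi / 2) ≤ FF N 1 := Real.neg_pi_div_two_le_arcsin _
  have hFN : FF N N ≤ Real.pi / 2 := Real.arcsin_le_pi_div_two _
  have hFp1 : 0 ≤ FF N (p + 1) := by
    apply Real.arcsin_nonneg.2
    apply div_nonneg _ ha.le
    have : (N : ℝ) ≤ 2 * (p : ℝ) := by exact_mod_cast hp2
    push_cast
    linarith
  have hg1 : gg N 1 = 1 / Real.sqrt N := by
    simp only [gg]
    rw [show ((1:ℕ) : ℝ) * ((N : ℝ) + 1 - ((1:ℕ) : ℝ)) = (N : ℝ) by push_cast; ring]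
  have hgN : gg N N = 1 / Real.sqrt N := by
    simp only [gg]
    rw [show (N : ℝ) * ((N : ℝ) + 1 - (N : ℝ)) = (N : ℝ) by ring]
  rw [hsum, hg1, hgN]
  have h2 : 2 / Real.sqrt (N : ℝ) = 1 / Real.sqrt N + 1 / Real.sqrt N := by ring
  rw [h2]
  linarith

end FuzzyAux

theorem fuzzyDiam_tendsto_pi :
    (∀ N : ℕ, 1 ≤ N → Odd N →
      2 * Real.arcsin (((N : ℝ) - 1) / ((N : ℝ) + 1)) ≤ fuzzyDiam N) ∧
    Tendsto fuzzyDiam atTop (nhds Real.pi) := by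
  constructor
  · intro N hN hodd
    obtain ⟨t, ht⟩ := hodd
    rw [show N = 2 * (t + 1) - 1 by omega]
    exact FuzzyAux.odd_lower (t + 1) (by omega)
  · have hlow : Tendsto (fun N : ℕ => 2 * Real.arcsin (((N : ℝ) - 1) / ((N : ℝ) + 1))
        - 2 * Real.arcsin (2 / ((N : ℝ) + 1))) atTop (nhds Real.pi) := by
      have h1 : Tendsto (fun N : ℕ => ((N : ℝ) - 1) / ((N : ℝ) + 1)) atTop (nhds 1) := by
        have heq : (fun N : ℕ => ((N : ℝ) - 1) / ((N : ℝ) + 1))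
            = fun N : ℕ => 1 - 2 * (1 / ((N : ℝ) + 1)) := by
          funext N
          have : ((N : ℝ) + 1) ≠ 0 := by positivity
          field_simp
          ring
        rw [heq]
        have := ((tendsto_one_div_add_atTop_nhds_zero_nat (𝕜 := ℝ)).const_mul 2)
        have h := (tendsto_const_nhds :
          Tendsto (fun _ : ℕ => (1:ℝ)) atTop (nhds 1)).sub this
        simpa using h
      have h2 : Tendsto (fun N : ℕ => 2 / ((N : ℝ) + 1)) atTop (nhds 0) := by
        have heq : (fun N : ℕ => 2 / ((N : ℝ) + 1)) = fun N : ℕ => 2 * (1 / ((N : ℝ) + 1)) := by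
          funext N; ring
        rw [heq]
        simpa using (tendsto_one_div_add_atTop_nhds_zero_nat (𝕜 := ℝ)).const_mul 2
      have ha1 : Tendsto (fun N : ℕ => Real.arcsin (((N : ℝ) - 1) / ((N : ℝ) + 1))) atTop
          (nhds (Real.pi / 2)) := by
        have := (Real.continuous_arcsin.tendsto 1).comp h1
        simpa [Function.comp_def, Real.arcsin_one] using this
      have ha2 : Tendsto (fun N : ℕ => Real.arcsin (2 / ((N : ℝ) + 1))) atTop (nhds 0) := by
        have := (Real.continuous_arcsin.tendsto 0).comp h2
        simpa [Function.comp_def, Real.arcsin_zero] using this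
      have := (ha1.const_mul 2).sub (ha2.const_mul 2)
      have hval : 2 * (Real.pi / 2) - 2 * (0:ℝ) = Real.pi := by ring
      rwa [hval] at this
    have hup : Tendsto (fun N : ℕ => Real.pi + 2 / Real.sqrt N) atTop (nhds Real.pi) := by
      have heq : (fun N : ℕ => Real.pi + 2 / Real.sqrt N)
          = fun N : ℕ => Real.pi + 2 * Real.sqrt (((N : ℝ))⁻¹) := by
        funext N
        rw [Real.sqrt_inv]
        ring
      rw [heq]
      have h0 : Tendsto (fun N : ℕ => Real.sqrt (((N : ℝ))⁻¹)) atTop (nhds 0) := by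
        have := (Real.continuous_sqrt.tendsto 0).comp (tendsto_inv_atTop_nhds_zero_nat (𝕜 := ℝ))
        simpa [Function.comp_def, Real.sqrt_zero] using this
      have := (tendsto_const_nhds :
        Tendsto (fun _ : ℕ => Real.pi) atTop (nhds Real.pi)).add (h0.const_mul 2)
      simpa using this
    apply tendsto_of_tendsto_of_tendsto_of_le_of_le' hlow hup
    · exact eventually_atTop.2 ⟨3, FuzzyAux.gen_lower⟩
    · exact eventually_atTop.2 ⟨3, FuzzyAux.gen_upper⟩
end
end
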